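/- Let N ≥ 1, let 𝟙 ∈ ℝ^N be the all-ones vector, and let r* ∈ ℝ^N be non-constant (not a scalar multiple of 𝟙). Then there exist vectors φ₁, …, φ_N ∈ ℝ^N such that: (i) the coordinates of each φᵢ sum to zero; (ii) every entry of every φᵢ lies in the interval [1/N − 1, 1/N]; and (iii) { x ∈ ℝ^N : ⟨φᵢ, x⟩ ≥ 0 for all i = 1, …, N } = { λ₁·r* + λ₂·𝟙 : λ₁ ≥ 0, λ₂ ∈ ℝ }, the set of positive affine transformations of r*. -/

import Mathlib

open Matrix

set_option maxHeartbeats 2000000 in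
/-- For any non-constant `r* ∈ ℝ^N` there are `N` vectors
`φ₁, …, φ_N`, each with coordinates summing to zero and entries in `[1/N - 1, 1/N]`,
whose joint half-space intersection is exactly the set of positive affine
transformations of `r*`. -/
theorem affine_set_eq_inter_halfspaces
    (N : ℕ) (hN : 1 ≤ N) (rstar : Fin N → ℝ)
    (hr : ¬∃ c : ℝ, rstar = c • (1 : Fin N → ℝ)) :
    ∃ φ : Fin N → (Fin N → ℝ),
      (∀ i, ∑ j, φ i j = 0) ∧
      (∀ i j, φ i j ∈ Set.Icc (1 / (N : ℝ) - 1) (1 / (N : ℝ))) ∧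
      {x : Fin N → ℝ | ∀ i, 0 ≤ φ i ⬝ᵥ x} =
        {x : Fin N → ℝ |
          ∃ l1 l2 : ℝ, 0 ≤ l1 ∧ x = l1 • rstar + l2 • (1 : Fin N → ℝ)} := by
  classical
  rcases eq_or_lt_of_le hN with h1 | hN2
  · exfalso
    apply hr
    refine ⟨rstar ⟨0, by omega⟩, funext fun i => ?_⟩
    have hi := i.isLt
    have hieq : i = ⟨0, by omega⟩ := Fin.ext (by omega)
    rw [hieq]; simp
  -- now 1 < N
  have hNR : (2:ℝ) ≤ (N:ℝ) := by exact_mod_cast hN2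
  haveI : NeZero N := ⟨by omega⟩
  have hN0 : (N:ℝ) ≠ 0 := by positivity
  set m : ℝ := (∑ j, rstar j) / N with hm
  set o : EuclideanSpace ℝ (Fin N) := WithLp.toLp 2 (fun _ => (1:ℝ)) with ho
  set s : EuclideanSpace ℝ (Fin N) := WithLp.toLp 2 (fun j => rstar j - m) with hs
  have hinner : ∀ u x : EuclideanSpace ℝ (Fin N), (inner ℝ u x : ℝ) = ∑ k, u k * x k := by
    intro u x; simp [PiLp.inner_apply, RCLike.inner_apply]
    exact Finset.sum_congr rfl fun _ _ => mul_comm _ _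
  have hssum : ∑ j, s j = 0 := by
    simp only [hs, Finset.sum_sub_distrib, Finset.sum_const, Finset.card_univ,
      Fintype.card_fin, nsmul_eq_mul, hm]
    field_simp
    simp
  have hs0 : s ≠ 0 := by
    intro h
    apply hr
    refine ⟨m, funext fun j => ?_⟩
    have := congrArg (fun v : EuclideanSpace ℝ (Fin N) => v j) h
    simp only [hs] at this
    have h0 : rstar j - m = 0 := this
    simp [Pi.smul_apply]
    linarith
  have hsq : 0 < ∑ k, s k * s k := by
    rcases Function.ne_iff.1 (show s.ofLp ≠ 0 from fun h => hs0 (WithLp.ofLp_injective 2 h)) with ⟨j, hj⟩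
    have : (0:ℝ) < s j * s j := mul_self_pos.2 hj
    refine Finset.sum_pos' (fun k _ => mul_self_nonneg _) ⟨j, Finset.mem_univ j, this⟩
  set K := Submodule.span ℝ ({s, o} : Set (EuclideanSpace ℝ (Fin N))) with hK
  set L := Kᗮ with hLdef
  have hsK : s ∈ K := Submodule.subset_span (by simp)
  have hoK : o ∈ K := Submodule.subset_span (by simp)
  have hLmem : ∀ u : EuclideanSpace ℝ (Fin N), u ∈ L →
      (∑ k, u k * s k = 0 ∧ ∑ k, u k = 0) := by
    intro u hu
    rw [hLdef, Submodule.mem_orthogonal] at hu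
    have h1 := hu s hsK
    have h2 := hu o hoK
    rw [hinner] at h1 h2
    constructor
    · rw [← h1]; exact Finset.sum_congr rfl fun k _ => mul_comm _ _
    · rw [← h2]; exact Finset.sum_congr rfl fun k _ => by simp [ho]
  have hLperp : Lᗮ = K := Submodule.orthogonal_orthogonal K
  have li : LinearIndependent ℝ ![s, o] := by
    rw [LinearIndependent.pair_iff]
    intro a c h
    have happ : ∀ k, a * s k + c = 0 := by
      intro k
      have := congrArg (fun v : EuclideanSpace ℝ (Fin N) => v k) h
      simpa [ho] using this
    have hsum : a * (∑ k, s k) + N * c = 0 := by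
      have h2 : ∑ k, (a * s k + c) = 0 := Finset.sum_eq_zero (fun k _ => happ k)
      rw [Finset.sum_add_distrib, Finset.sum_const, Finset.card_univ, Fintype.card_fin,
        nsmul_eq_mul, ← Finset.mul_sum] at h2
      exact h2
    rw [hssum, mul_zero, zero_add] at hsum
    have hc : c = 0 := by
      have := mul_eq_zero.1 hsum
      tauto
    subst hc
    refine ⟨?_, rfl⟩
    rcases Function.ne_iff.1 (show s.ofLp ≠ 0 from fun h => hs0 (WithLp.ofLp_injective 2 h)) with ⟨j, hj⟩
    have := happ j
    rw [add_zero] at this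
    rcases mul_eq_zero.1 this with h' | h'
    · exact h'
    · exact absurd h' hj
  have hrange : Set.range ![s, o] = {s, o} := by
    simp [Matrix.range_cons, Matrix.range_empty, Set.pair_comm]
  have hK2 : Module.finrank ℝ K = 2 := by
    rw [hK, ← hrange, finrank_span_eq_card li, Fintype.card_fin]
  have hEr : Module.finrank ℝ (EuclideanSpace ℝ (Fin N)) = N := finrank_euclideanSpace_fin
  have hLrank : Module.finrank ℝ L = N - 2 := by
    have h := Submodule.finrank_add_finrank_orthogonal K
    rw [hK2, hEr, ← hLdef] at h
    omega
  let b : Module.Basis (Fin (N-2)) ℝ L := (Module.finBasis ℝ L).reindex (finCongr hLrank)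
  set w : Fin N → L := (fun j => if (j:ℕ) = N - 1 then -(∑ k, b k)
    else if h : (j:ℕ) - 1 < N - 2 then b ⟨(j:ℕ)-1, h⟩ else 0) with hw
  set v : Fin N → EuclideanSpace ℝ (Fin N) :=
    (fun j => if j = 0 then s else (w j : EuclideanSpace ℝ (Fin N))) with hv
  have hv0 : v 0 = s := by rw [hv]; simp
  have hvL : ∀ j, j ≠ 0 → v j ∈ L := by
    intro j hj
    rw [hv]; simp only [if_neg hj]
    exact SetLike.coe_mem (w j)
  have hvsum : ∀ j, ∑ k, v j k = 0 := by
    intro j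
    by_cases hj : j = 0
    · subst hj; rw [hv0]; exact hssum
    · exact (hLmem _ (hvL j hj)).2
  have hvs : ∀ j, j ≠ 0 → ∑ k, v j k * s k = 0 := fun j hj =>
    (hLmem _ (hvL j hj)).1
  have hvr : ∀ i, ∑ k, v i k * rstar k = (if i = 0 then ∑ k, s k * s k else 0) := by
    intro i
    have hsplit : ∑ k, v i k * rstar k = ∑ k, v i k * s k + m * ∑ k, v i k := by
      rw [Finset.mul_sum, ← Finset.sum_add_distrib]
      refine Finset.sum_congr rfl fun k _ => ?_
      have hrk : rstar k = s k + m := by simp [hs]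
      rw [hrk]; ring
    by_cases hi : i = 0
    · subst hi
      rw [hsplit, hvsum, mul_zero, add_zero, if_pos rfl, hv0]
    · simp [hsplit, hvs i hi, hvsum, hi]
  -- the scaling
  set M : ℝ := 1 + ∑ j, ∑ k, |v j k| with hM
  have hM1 : (1:ℝ) ≤ M := by
    rw [hM]
    have : (0:ℝ) ≤ ∑ j, ∑ k, |v j k| :=
      Finset.sum_nonneg fun j _ => Finset.sum_nonneg fun k _ => abs_nonneg _
    linarith
  have hMpos : (0:ℝ) < M := lt_of_lt_of_le one_pos hM1
  have hvM : ∀ j k, |v j k| ≤ M := by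
    intro j k
    have h1 : |v j k| ≤ ∑ k', |v j k'| :=
      Finset.single_le_sum (f := fun k' => |v j k'|) (fun _ _ => abs_nonneg _)
        (Finset.mem_univ k)
    have h2 : ∑ k', |v j k'| ≤ ∑ j', ∑ k', |v j' k'| :=
      Finset.single_le_sum (f := fun j' => ∑ k', |v j' k'|)
        (fun _ _ => Finset.sum_nonneg fun _ _ => abs_nonneg _) (Finset.mem_univ j)
    rw [hM]; linarith
  set ε : ℝ := 1 / (N * M) with he
  have hε : 0 < ε := by rw [he]; positivity
  have hdot : ∀ (i : Fin N) (x : Fin N → ℝ),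
      (fun k => ε * v i k) ⬝ᵥ x = ε * ∑ k, v i k * x k := by
    intro i x
    simp [dotProduct, Finset.mul_sum, mul_assoc]
  refine ⟨fun i => fun k => ε * v i k, ?_, ?_, ?_⟩
  · intro i
    rw [← Finset.mul_sum, hvsum, mul_zero]
  · intro i k
    have key : |ε * v i k| ≤ 1 / N := by
      rw [abs_mul, abs_of_pos hε]
      have h1 : ε * |v i k| ≤ ε * M :=
        mul_le_mul_of_nonneg_left (hvM i k) (le_of_lt hε)
      have h2 : ε * M = 1 / N := by
        rw [he]; field_simp
      exact le_of_le_of_eq h1 h2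
    have habs := abs_le.1 key
    have h2N : (2:ℝ) / N ≤ 1 := by
      rw [div_le_one (by positivity)]; exact hNR
    have h2N' : (2:ℝ) / N = 2 * (1 / N) := by ring
    constructor
    · have := habs.1; rw [h2N'] at h2N; linarith
    · exact habs.2
  · ext x
    simp only [Set.mem_setOf_eq]
    constructor
    · intro hx
      set xE : EuclideanSpace ℝ (Fin N) := (WithLp.equiv 2 (Fin N → ℝ)).symm x with hxE
      have hxEt : ∀ t, xE t = x t := fun t => rfl
      have hIP : ∀ u : EuclideanSpace ℝ (Fin N), ∑ t, u t * x t = (inner ℝ u xE : ℝ) := by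
        intro u
        rw [hinner]
        exact Finset.sum_congr rfl fun t _ => by rw [hxEt]
      have hx' : ∀ i, 0 ≤ ∑ k, v i k * x k := by
        intro i
        have h := hx i
        rw [hdot] at h
        nlinarith
      -- the basis vectors are orthogonal to x
      have hbk : ∀ k : Fin (N-2),
          0 ≤ (inner ℝ ((b k : EuclideanSpace ℝ (Fin N))) xE : ℝ) := by
        intro k
        have hk1 : (k:ℕ) + 1 < N := by have := k.isLt; omega
        have hne : (⟨(k:ℕ)+1, hk1⟩ : Fin N) ≠ 0 := by
          simp [Fin.ext_iff]
        have hvk : v ⟨(k:ℕ)+1, hk1⟩ = (b k : EuclideanSpace ℝ (Fin N)) := by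
          rw [hv]
          simp only [if_neg hne]
          rw [hw]
          have hk2 := k.isLt
          have h1 : ¬ (((⟨(k:ℕ)+1, hk1⟩ : Fin N) : ℕ) = N - 1) := by
            simp only [Fin.val_mk]; omega
          have h2 : ((⟨(k:ℕ)+1, hk1⟩ : Fin N) : ℕ) - 1 < N - 2 := by
            simp only [Fin.val_mk]; omega
          simp only [if_neg h1, dif_pos h2]
          have hik : (⟨((⟨(k:ℕ)+1, hk1⟩ : Fin N) : ℕ) - 1, h2⟩ : Fin (N-2)) = k := by
            apply Fin.ext
            simp
          rw [hik]
        rw [← hIP, ← hvk]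
        exact hx' _
      have hlastlt : N - 1 < N := by omega
      have hlastne : (⟨N-1, hlastlt⟩ : Fin N) ≠ 0 := by
        simp [Fin.ext_iff]; omega
      have hvlast : v ⟨N-1, hlastlt⟩ = ((-(∑ k, b k) : L) : EuclideanSpace ℝ (Fin N)) := by
        rw [hv]
        simp only [if_neg hlastne]
        rw [hw]
        have hcond : ((⟨N-1, hlastlt⟩ : Fin N) : ℕ) = N - 1 := rfl
        simp only [if_pos hcond]
        simp
      have hcoe : ((-(∑ k, b k) : L) : EuclideanSpace ℝ (Fin N))
          = -(∑ k : Fin (N-2), ((b k : EuclideanSpace ℝ (Fin N)))) := by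
        push_cast
        ring
      have hT0 : ∑ k : Fin (N-2), (inner ℝ ((b k : EuclideanSpace ℝ (Fin N))) xE : ℝ) = 0 := by
        have hpos : 0 ≤ ∑ k : Fin (N-2), (inner ℝ ((b k : EuclideanSpace ℝ (Fin N))) xE : ℝ) :=
          Finset.sum_nonneg fun k _ => hbk k
        have hneg : 0 ≤ ∑ t, (v ⟨N-1, hlastlt⟩) t * x t := hx' _
        rw [hvlast, hIP, hcoe, inner_neg_left, sum_inner] at hneg
        have hneg' : 0 ≤ -∑ k : Fin (N-2), (inner ℝ ((b k : EuclideanSpace ℝ (Fin N))) xE : ℝ) := by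
          exact_mod_cast hneg
        linarith
      have hbz : ∀ k : Fin (N-2), (inner ℝ ((b k : EuclideanSpace ℝ (Fin N))) xE : ℝ) = 0 :=
        fun k => (Finset.sum_eq_zero_iff_of_nonneg (fun k _ => hbk k)).1 hT0 k
          (Finset.mem_univ k)
      -- x is in the double orthogonal complement of L, i.e. in K
      have hLspan : L = Submodule.span ℝ
          (Set.range (fun k : Fin (N-2) => ((b k : EuclideanSpace ℝ (Fin N))))) := by
        conv_lhs => rw [← Submodule.map_subtype_top L, ← b.span_eq]
        rw [Submodule.map_span, ← Set.range_comp]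
        rfl
      have hxperp : xE ∈ Lᗮ := by
        rw [Submodule.mem_orthogonal]
        intro u hu
        rw [hLspan] at hu
        induction hu using Submodule.span_induction with
        | mem y hy =>
            rcases hy with ⟨k, rfl⟩
            exact hbz k
        | zero => exact inner_zero_left _
        | add y z hy hz hy' hz' => rw [inner_add_left, hy', hz', add_zero]
        | smul a y hy hy' => rw [real_inner_smul_left, hy', mul_zero]
      have hxK : xE ∈ K := by
        rw [← hLperp]; exact hxperp
      rw [hK, Submodule.mem_span_pair] at hxK
      obtain ⟨a, c, hac⟩ := hxK
      have hxk : ∀ k, x k = a * s k + c := by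
        intro k
        have h' := congrArg (fun v : EuclideanSpace ℝ (Fin N) => v k) hac
        have h'' : a * s k + c * 1 = xE k := h'
        rw [hxEt] at h''
        rw [← h'']; ring
      have hsx : ∑ k, s k * x k = a * ∑ k, s k * s k := by
        rw [Finset.mul_sum]
        calc ∑ k, s k * x k = ∑ k, (a * (s k * s k) + c * s k) := by
              refine Finset.sum_congr rfl fun k _ => ?_
              rw [hxk k]; ring
          _ = a * (∑ k, s k * s k) + c * ∑ k, s k := by
              rw [Finset.sum_add_distrib, ← Finset.mul_sum, ← Finset.mul_sum]
          _ = ∑ k, a * (s k * s k) := by rw [hssum, mul_zero, add_zero, Finset.mul_sum]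
      have ha : 0 ≤ a := by
        have h0 := hx' 0
        rw [hv0] at h0
        rw [hsx] at h0
        by_contra hneg
        push_neg at hneg
        have := mul_neg_of_neg_of_pos hneg hsq
        linarith
      refine ⟨a, c - a * m, ha, funext fun k => ?_⟩
      have hsk : s k = rstar k - m := by rw [hs]
      have : x k = a * s k + c := hxk k
      simp only [Pi.add_apply, Pi.smul_apply, Pi.one_apply, smul_eq_mul]
      rw [this, hsk]; ring
    · rintro ⟨l1, l2, hl1, rfl⟩ i
      rw [hdot]
      have hxk : ∀ k, (l1 • rstar + l2 • (1 : Fin N → ℝ)) k = l1 * rstar k + l2 := by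
        intro k; simp
      have : ∑ k, v i k * (l1 • rstar + l2 • (1 : Fin N → ℝ)) k
          = l1 * ∑ k, v i k * rstar k + l2 * ∑ k, v i k := by
        rw [Finset.mul_sum, Finset.mul_sum, ← Finset.sum_add_distrib]
        refine Finset.sum_congr rfl fun k _ => ?_
        rw [hxk k]; ring
      rw [this, hvsum, mul_zero, add_zero, hvr i]
      by_cases hi : i = 0
      · rw [if_pos hi]
        have := le_of_lt hsq
        positivity
      · rw [if_neg hi, mul_zero, mul_zero]
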